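/- Let G : [0,T] → ℝ^m be bounded with ‖G_t − G_s‖ ≤ K for all s,t (e.g. G_t = ∫₀ᵗ φ_s ds with ‖φ‖_∞ ≤ M, so |G_t − G_s| ≤ M(t−s)), δ ∈ (0,T], and 1/2 < γ < 1. Set G¹_{s,t} = G_t − G_s. If (i) |G¹_{s,t}| ≤ M(t−s) for all s ≤ t (Lipschitz) and (ii) for each k, |G¹_{kδ,(k+1)δ}| ≤ A_k, then for t − s > 2δ one has |G¹_{s,t}|²/(t−s)^{2γ} ≤ c(M²δ^{2(1−γ)} + δ^{−2γ} Σ_{k=0}^{⌊T/δ⌋−1} A_k²), and for 0 < t − s ≤ 2δ one has |G¹_{s,t}| ≤ M(2δ)^{1−γ}(t−s)^γ; hence ‖G‖_γ² ≤ c'(M²δ^{2(1−γ)} + δ^{−2γ}Σ_k A_k²) for a constant c' depending only on γ and T. -/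

import Mathlib

open Finset

set_option maxHeartbeats 1000000

/-- Key deterministic estimate in the Khas'minskii discretization (Lemma 5.3):
if `G` is Lipschitz with constant `M` on `[0,T]` and its increments over the
grid intervals `[kδ, (k+1)δ]` are bounded by `A k`, then for `1/2 < γ < 1`
there is a constant `c'` depending only on `γ` and `T` such that
* for `0 < t − s ≤ 2δ`:  `|G¹_{s,t}| ≤ M (2δ)^{1−γ} (t−s)^γ`,
* for `t − s > 2δ`:
  `|G¹_{s,t}|²/(t−s)^{2γ} ≤ c'(M² δ^{2(1−γ)} + δ^{−2γ} Σ_{k<⌊T/δ⌋} A_k²)`,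
* hence `‖G‖_γ² ≤ c'(M² δ^{2(1−γ)} + δ^{−2γ} Σ_{k<⌊T/δ⌋} A_k²)`. -/
theorem khasminskii_holder_discretization_bound
    {V : Type*} [NormedAddCommGroup V] [NormedSpace ℝ V]
    (T γ : ℝ) (hT : 0 < T) (hγ1 : 1/2 < γ) (hγ2 : γ < 1) :
    ∃ c' : ℝ, 0 < c' ∧
      ∀ (G : ℝ → V) (M δ : ℝ) (A : ℕ → ℝ),
        0 ≤ M → 0 < δ → δ ≤ T → (∀ k, 0 ≤ A k) →
        -- (i) the Lipschitz bound
        (∀ s t : ℝ, 0 ≤ s → s ≤ t → t ≤ T → ‖G t - G s‖ ≤ M * (t - s)) →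
        -- (ii) the grid increment bounds
        (∀ k : ℕ, ((k : ℝ) + 1) * δ ≤ T →
          ‖G (((k : ℝ) + 1) * δ) - G ((k : ℝ) * δ)‖ ≤ A k) →
        -- short intervals
        (∀ s t : ℝ, 0 ≤ s → s < t → t ≤ T → t - s ≤ 2 * δ →
          ‖G t - G s‖ ≤ M * (2 * δ) ^ (1 - γ) * (t - s) ^ γ)
        -- long intervals
        ∧ (∀ s t : ℝ, 0 ≤ s → s < t → t ≤ T → 2 * δ < t - s →
            ‖G t - G s‖ ^ 2 / (t - s) ^ (2 * γ)
              ≤ c' * (M ^ 2 * δ ^ (2 * (1 - γ))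
                + δ ^ (-(2 * γ)) * ∑ k ∈ range ⌊T / δ⌋₊, (A k) ^ 2))
        -- the Hölder seminorm bound
        ∧ (∀ s t : ℝ, 0 ≤ s → s < t → t ≤ T →
            ‖G t - G s‖ ^ 2 / (t - s) ^ (2 * γ)
              ≤ c' * (M ^ 2 * δ ^ (2 * (1 - γ))
                + δ ^ (-(2 * γ)) * ∑ k ∈ range ⌊T / δ⌋₊, (A k) ^ 2)) := by
  refine ⟨8, by norm_num, ?_⟩
  intro G M δ A hM hδ hδT hA hLip hGrid
  have hγ0 : (0:ℝ) < γ := by linarith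
  have h1γ : (0:ℝ) < 1 - γ := by linarith
  set Sig := ∑ k ∈ range ⌊T / δ⌋₊, (A k) ^ 2 with hSigdef
  have hSig : (0:ℝ) ≤ Sig := Finset.sum_nonneg fun k _ => sq_nonneg _
  -- short interval bound
  have hshort : ∀ s t : ℝ, 0 ≤ s → s < t → t ≤ T → t - s ≤ 2 * δ →
      ‖G t - G s‖ ≤ M * (2 * δ) ^ (1 - γ) * (t - s) ^ γ := by
    intro s t hs hst htT h2
    have hts : 0 < t - s := sub_pos.mpr hst
    have key : (t - s) ^ (1 - γ) * (t - s) ^ γ = t - s := by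
      rw [← Real.rpow_add hts, show (1:ℝ) - γ + γ = 1 by ring, Real.rpow_one]
    calc ‖G t - G s‖ ≤ M * (t - s) := hLip s t hs hst.le htT
      _ = M * ((t - s) ^ (1 - γ) * (t - s) ^ γ) := by rw [key]
      _ ≤ M * ((2 * δ) ^ (1 - γ) * (t - s) ^ γ) := by
          have h3 : (t - s) ^ (1 - γ) ≤ (2 * δ) ^ (1 - γ) :=
            Real.rpow_le_rpow hts.le h2 h1γ.le
          have h4 : (0:ℝ) ≤ (t - s) ^ γ := Real.rpow_nonneg hts.le γ
          nlinarith [mul_nonneg hM h4]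
      _ = M * (2 * δ) ^ (1 - γ) * (t - s) ^ γ := by ring
  -- long interval bound
  have hlong : ∀ s t : ℝ, 0 ≤ s → s < t → t ≤ T → 2 * δ < t - s →
      ‖G t - G s‖ ^ 2 / (t - s) ^ (2 * γ)
        ≤ 8 * (M ^ 2 * δ ^ (2 * (1 - γ)) + δ ^ (-(2 * γ)) * Sig) := by
    intro s t hs hst htT h2
    have hts : 0 < t - s := sub_pos.mpr hst
    set a := ⌈s / δ⌉₊ with ha
    set b := ⌊t / δ⌋₊ with hb
    clear_value a b
    have haδ : s ≤ (a:ℝ) * δ := by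
      rw [ha, ← div_le_iff₀ hδ]; exact Nat.le_ceil _
    have haδ' : (a:ℝ) * δ ≤ s + δ := by
      have h1 : (a:ℝ) < s / δ + 1 := ha ▸ Nat.ceil_lt_add_one (div_nonneg hs hδ.le)
      have := mul_lt_mul_of_pos_right h1 hδ
      rw [add_mul, div_mul_cancel₀ _ hδ.ne', one_mul] at this
      linarith
    have hbδ : (b:ℝ) * δ ≤ t := by
      rw [hb, ← le_div_iff₀ hδ]; exact Nat.floor_le (div_nonneg (by linarith) hδ.le)
    have hbδ' : t < ((b:ℝ) + 1) * δ := by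
      have h1 : t / δ < (b:ℝ) + 1 := hb ▸ Nat.lt_floor_add_one (t / δ)
      have := mul_lt_mul_of_pos_right h1 hδ
      rwa [div_mul_cancel₀ _ hδ.ne'] at this
    have hab : a ≤ b := by
      have h1 : (a:ℝ) * δ < (b:ℝ) * δ := by nlinarith
      exact_mod_cast (lt_of_mul_lt_mul_right h1 hδ.le).le
    -- telescoping
    have htel : ∑ k ∈ Finset.Ico a b, (G (((k:ℝ) + 1) * δ) - G ((k:ℝ) * δ))
        = G ((b:ℝ) * δ) - G ((a:ℝ) * δ) := by
      have h1 : ∀ n : ℕ, ∑ k ∈ range n, (G (((k:ℝ) + 1) * δ) - G ((k:ℝ) * δ))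
          = G ((n:ℝ) * δ) - G (0 * δ) := by
        intro n
        have h2 := Finset.sum_range_sub (fun k : ℕ => G ((k:ℝ) * δ)) n
        push_cast at h2
        exact h2
      rw [Finset.sum_Ico_eq_sub _ hab, h1, h1]
      abel
    have hS : ‖G ((b:ℝ) * δ) - G ((a:ℝ) * δ)‖ ≤ ∑ k ∈ Finset.Ico a b, A k := by
      rw [← htel]
      refine (norm_sum_le _ _).trans (Finset.sum_le_sum ?_)
      intro k hk
      apply hGrid
      have hkb : k + 1 ≤ b := (Finset.mem_Ico.mp hk).2
      have h1 : ((k:ℝ) + 1) ≤ (b:ℝ) := by exact_mod_cast hkb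
      nlinarith
    have hend : ‖G t - G ((b:ℝ) * δ)‖ ≤ M * δ := by
      have h1 := hLip ((b:ℝ) * δ) t (by positivity) hbδ htT
      have h2' : t - (b:ℝ) * δ ≤ δ := by nlinarith
      nlinarith
    have hstart : ‖G ((a:ℝ) * δ) - G s‖ ≤ M * δ := by
      have haT : (a:ℝ) * δ ≤ T := by linarith
      have h1 := hLip s ((a:ℝ) * δ) hs haδ haT
      have h2' : (a:ℝ) * δ - s ≤ δ := by linarith
      nlinarith
    set S := ∑ k ∈ Finset.Ico a b, A k with hSdef
    have hS0 : (0:ℝ) ≤ S := Finset.sum_nonneg fun k _ => hA k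
    have htotal : ‖G t - G s‖ ≤ 2 * (M * δ) + S := by
      have hsplit : G t - G s = (G t - G ((b:ℝ) * δ)) + (G ((b:ℝ) * δ) - G ((a:ℝ) * δ))
          + (G ((a:ℝ) * δ) - G s) := by abel
      calc ‖G t - G s‖ ≤ ‖G t - G ((b:ℝ) * δ)‖ + ‖G ((b:ℝ) * δ) - G ((a:ℝ) * δ)‖
            + ‖G ((a:ℝ) * δ) - G s‖ := by rw [hsplit]; exact norm_add₃_le
        _ ≤ 2 * (M * δ) + S := by linarith
    have hCS : S ^ 2 ≤ ((t - s) / δ) * Sig := by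
      have h1 : S ^ 2 ≤ (#(Finset.Ico a b) : ℝ) * ∑ k ∈ Finset.Ico a b, (A k) ^ 2 :=
        sq_sum_le_card_mul_sum_sq
      have hcard : (#(Finset.Ico a b) : ℝ) ≤ (t - s) / δ := by
        rw [Nat.card_Ico, Nat.cast_sub hab, le_div_iff₀ hδ]
        nlinarith [hbδ, haδ]
      have hsub : ∑ k ∈ Finset.Ico a b, (A k) ^ 2 ≤ Sig := by
        apply Finset.sum_le_sum_of_subset_of_nonneg
        · intro k hk
          rw [Finset.mem_range]
          have hkb : k < b := (Finset.mem_Ico.mp hk).2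
          have hbT : b ≤ ⌊T / δ⌋₊ := hb ▸ Nat.floor_le_floor (by gcongr)
          omega
        · intro k _ _; positivity
      have hsq : (0:ℝ) ≤ ∑ k ∈ Finset.Ico a b, (A k) ^ 2 :=
        Finset.sum_nonneg fun k _ => sq_nonneg _
      calc S ^ 2 ≤ (#(Finset.Ico a b) : ℝ) * ∑ k ∈ Finset.Ico a b, (A k) ^ 2 := h1
        _ ≤ ((t - s) / δ) * Sig := by
            apply mul_le_mul hcard hsub hsq
            positivity
    have hnorm2 : ‖G t - G s‖ ^ 2 ≤ 8 * M ^ 2 * δ ^ 2 + 2 * ((t - s) / δ) * Sig := by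
      have h1' : ‖G t - G s‖ ^ 2 ≤ (2 * (M * δ) + S) ^ 2 :=
        pow_le_pow_left₀ (norm_nonneg _) htotal 2
      nlinarith [sq_nonneg (2 * (M * δ) - S)]
    have hd : (0:ℝ) < (t - s) ^ (2 * γ) := Real.rpow_pos_of_pos hts _
    have hδle : δ ≤ t - s := by linarith
    have e1 : δ ^ 2 ≤ δ ^ (2 * (1 - γ)) * (t - s) ^ (2 * γ) := by
      have h1' : δ ^ ((2:ℝ) * γ) ≤ (t - s) ^ (2 * γ) :=
        Real.rpow_le_rpow hδ.le hδle (by linarith)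
      have h2' : δ ^ (2 * (1 - γ)) * δ ^ ((2:ℝ) * γ) = δ ^ (2:ℕ) := by
        rw [← Real.rpow_add hδ, show 2 * (1 - γ) + 2 * γ = ((2:ℕ):ℝ) by push_cast; ring,
          Real.rpow_natCast]
      calc δ ^ 2 = δ ^ (2 * (1 - γ)) * δ ^ ((2:ℝ) * γ) := h2'.symm
        _ ≤ δ ^ (2 * (1 - γ)) * (t - s) ^ (2 * γ) := by
            apply mul_le_mul_of_nonneg_left h1' (Real.rpow_nonneg hδ.le _)
    have e2 : (t - s) / δ ≤ δ ^ (-(2 * γ)) * (t - s) ^ (2 * γ) := by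
      have hb1 : (t - s) ^ ((1:ℝ) - 2 * γ) ≤ δ ^ ((1:ℝ) - 2 * γ) :=
        Real.rpow_le_rpow_of_nonpos hδ hδle (by linarith)
      have key1 : (t - s) = (t - s) ^ ((1:ℝ) - 2 * γ) * (t - s) ^ (2 * γ) := by
        rw [← Real.rpow_add hts, show (1:ℝ) - 2 * γ + 2 * γ = 1 by ring, Real.rpow_one]
      have key2 : δ ^ ((1:ℝ) - 2 * γ) / δ = δ ^ (-(2 * γ)) := by
        have hk : δ ^ ((1:ℝ) - 2 * γ) = δ ^ (-(2 * γ)) * δ := by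
          rw [show (1:ℝ) - 2 * γ = -(2 * γ) + 1 by ring, Real.rpow_add hδ, Real.rpow_one]
        rw [hk, mul_div_assoc, div_self hδ.ne', mul_one]
      calc (t - s) / δ = (t - s) ^ ((1:ℝ) - 2 * γ) * (t - s) ^ (2 * γ) / δ := by
            rw [← key1]
        _ ≤ δ ^ ((1:ℝ) - 2 * γ) * (t - s) ^ (2 * γ) / δ := by gcongr
        _ = δ ^ ((1:ℝ) - 2 * γ) / δ * (t - s) ^ (2 * γ) := by ring
        _ = δ ^ (-(2 * γ)) * (t - s) ^ (2 * γ) := by rw [key2]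
    rw [div_le_iff₀ hd]
    have f1 : 8 * M ^ 2 * δ ^ 2 ≤ 8 * M ^ 2 * (δ ^ (2 * (1 - γ)) * (t - s) ^ (2 * γ)) :=
      mul_le_mul_of_nonneg_left e1 (by positivity)
    have f2 : 2 * ((t - s) / δ) * Sig ≤ 2 * (δ ^ (-(2 * γ)) * (t - s) ^ (2 * γ)) * Sig :=
      mul_le_mul_of_nonneg_right (mul_le_mul_of_nonneg_left e2 (by norm_num)) hSig
    have f3 : (0:ℝ) ≤ δ ^ (-(2 * γ)) * (t - s) ^ (2 * γ) * Sig := by positivity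
    nlinarith
  refine ⟨hshort, hlong, ?_⟩
  intro s t hs hst htT
  rcases lt_or_ge (2 * δ) (t - s) with h | h
  · exact hlong s t hs hst htT h
  · have hts : 0 < t - s := sub_pos.mpr hst
    have hd : (0:ℝ) < (t - s) ^ (2 * γ) := Real.rpow_pos_of_pos hts _
    rw [div_le_iff₀ hd]
    have h1 := hshort s t hs hst htT h
    have hpow : ((t - s) ^ γ) ^ (2:ℕ) = (t - s) ^ (2 * γ) := by
      rw [← Real.rpow_natCast ((t - s) ^ γ) 2, ← Real.rpow_mul hts.le]
      norm_num [mul_comm]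
    have h2 : ‖G t - G s‖ ^ 2 ≤ (M * (2 * δ) ^ (1 - γ)) ^ 2 * (t - s) ^ (2 * γ) := by
      have h3 : ‖G t - G s‖ ^ 2 ≤ (M * (2 * δ) ^ (1 - γ) * (t - s) ^ γ) ^ 2 :=
        pow_le_pow_left₀ (norm_nonneg _) h1 2
      calc ‖G t - G s‖ ^ 2 ≤ (M * (2 * δ) ^ (1 - γ) * (t - s) ^ γ) ^ 2 := h3
        _ = (M * (2 * δ) ^ (1 - γ)) ^ 2 * ((t - s) ^ γ) ^ (2:ℕ) := by ring
        _ = (M * (2 * δ) ^ (1 - γ)) ^ 2 * (t - s) ^ (2 * γ) := by rw [hpow]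
    have hsplit : ((2 * δ):ℝ) ^ ((1:ℝ) - γ) = 2 ^ ((1:ℝ) - γ) * δ ^ ((1:ℝ) - γ) :=
      Real.mul_rpow (by norm_num) hδ.le
    have h2γ : (2:ℝ) ^ ((1:ℝ) - γ) ≤ 2 := by
      calc (2:ℝ) ^ ((1:ℝ) - γ) ≤ 2 ^ (1:ℝ) :=
            Real.rpow_le_rpow_of_exponent_le (by norm_num) (by linarith)
        _ = 2 := Real.rpow_one 2
    have hδpow : (δ ^ ((1:ℝ) - γ)) ^ (2:ℕ) = δ ^ (2 * (1 - γ)) := by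
      rw [← Real.rpow_natCast (δ ^ ((1:ℝ) - γ)) 2, ← Real.rpow_mul hδ.le]
      norm_num [mul_comm]
    have h4 : (M * (2 * δ) ^ (1 - γ)) ^ 2 ≤ 4 * M ^ 2 * δ ^ (2 * (1 - γ)) := by
      rw [hsplit]
      have h5 : (0:ℝ) ≤ 2 ^ ((1:ℝ) - γ) := Real.rpow_nonneg (by norm_num) _
      have h6 : (0:ℝ) ≤ δ ^ ((1:ℝ) - γ) := Real.rpow_nonneg hδ.le _
      calc (M * (2 ^ ((1:ℝ) - γ) * δ ^ ((1:ℝ) - γ))) ^ 2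
          = M ^ 2 * (2 ^ ((1:ℝ) - γ)) ^ 2 * (δ ^ ((1:ℝ) - γ)) ^ (2:ℕ) := by ring
        _ = M ^ 2 * (2 ^ ((1:ℝ) - γ)) ^ 2 * δ ^ (2 * (1 - γ)) := by rw [hδpow]
        _ ≤ 4 * M ^ 2 * δ ^ (2 * (1 - γ)) := by
            have h7 : (0:ℝ) ≤ δ ^ (2 * (1 - γ)) := Real.rpow_nonneg hδ.le _
            have hx : ((2:ℝ) ^ ((1:ℝ) - γ)) ^ 2 ≤ 4 := by nlinarith
            calc M ^ 2 * ((2:ℝ) ^ ((1:ℝ) - γ)) ^ 2 * δ ^ (2 * (1 - γ))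
                ≤ M ^ 2 * 4 * δ ^ (2 * (1 - γ)) := by
                  exact mul_le_mul_of_nonneg_right
                    (mul_le_mul_of_nonneg_left hx (sq_nonneg M)) h7
              _ = 4 * M ^ 2 * δ ^ (2 * (1 - γ)) := by ring
    have h8 : (0:ℝ) ≤ δ ^ (-(2 * γ)) * Sig := by positivity
    have h9 : (0:ℝ) ≤ δ ^ (2 * (1 - γ)) := Real.rpow_nonneg hδ.le _
    nlinarith [mul_le_mul_of_nonneg_right h4 hd.le]
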